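/- Let q be a nonnegative, transient, substochastic n×n matrix with reward vector r ∈ ℝ^n, so that Hypothesis RN holds with amplifications a(j) = Σ_p q(j,p), and let M be a nonempty subset of the index set. Suppose i ∈ M is weakly preferable to every other state in M (with respect to the data q, r). Let (q̄, r̄) be obtained from (q, r) by the pivot at i, with updated amplifications ā(j) = Σ_p q̄(j,p) and updated ratios ρ̄ computed from (q̄, r̄). Then ρ̄(i) = ρ(i), and for every j ∈ M \ {i} one has ρ(i) ≥ ρ̄(j) ≥ ρ(j) in the extended reals. -/

import Mathlib

open Matrix Filter

open scoped Classical

/-- The matrix produced by the pivot at index `i`. -/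
noncomputable def pivotQ {n : ℕ} (q : Matrix (Fin n) (Fin n) ℝ) (i : Fin n) :
    Matrix (Fin n) (Fin n) ℝ := fun j p =>
  if p = i then 0
  else if j = i then q i p / (1 - q i i)
  else q j p + q j i * (q i p / (1 - q i i))

/-- The reward vector produced by the pivot at index `i`. -/
noncomputable def pivotR {n : ℕ} (q : Matrix (Fin n) (Fin n) ℝ) (r : Fin n → ℝ)
    (i : Fin n) : Fin n → ℝ := fun j =>
  if j = i then r i / (1 - q i i) else r j + q j i * (r i / (1 - q i i))

/-- Amplification of state `j`: the `j`-th row sum of `q`. -/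
noncomputable def ampl {n : ℕ} (q : Matrix (Fin n) (Fin n) ℝ) (j : Fin n) : ℝ :=
  ∑ p, q j p

/-- Category of state `j` under Hypothesis RN. -/
noncomputable def catOf {n : ℕ} (q : Matrix (Fin n) (Fin n) ℝ) (r : Fin n → ℝ)
    (j : Fin n) : ℕ :=
  if ampl q j < 1 then 2 else if 0 ≤ r j then 1 else 3

/-- Ratio of state `j` under Hypothesis RN, in the extended reals. -/
noncomputable def rhoOf {n : ℕ} (q : Matrix (Fin n) (Fin n) ℝ) (r : Fin n → ℝ)
    (j : Fin n) : EReal :=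
  if ampl q j < 1 then ((r j / (1 - ampl q j) : ℝ) : EReal)
  else if 0 ≤ r j then ⊤ else ⊥

/-- `i` is weakly preferable to `j` with respect to data `(q, r)`. -/
noncomputable def WeaklyPref {n : ℕ} (q : Matrix (Fin n) (Fin n) ℝ) (r : Fin n → ℝ)
    (i j : Fin n) : Prop :=
  r i + ampl q i * r j > r j + ampl q j * r i ∨
    (r i + ampl q i * r j = r j + ampl q j * r i ∧ catOf q r i ≤ catOf q r j)

lemma diag_lt_one {n : ℕ} (q : Matrix (Fin n) (Fin n) ℝ) (i : Fin n)
    (hnn : ∀ j p, 0 ≤ q j p) (hsub : ∀ j, ∑ p, q j p ≤ 1)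
    (htr : ∀ j p, Tendsto (fun t : ℕ => (q ^ t) j p) atTop (nhds 0)) :
    q i i < 1 := by
  by_contra h
  push_neg at h
  have hle : q i i ≤ 1 := le_trans (Finset.single_le_sum (fun p _ => hnn i p) (Finset.mem_univ i)) (hsub i)
  have heq : q i i = 1 := le_antisymm hle h
  have hzero : ∀ p, p ≠ i → q i p = 0 := by
    intro p hp
    have hsum : q i i + q i p ≤ ∑ p', q i p' := by
      rw [← Finset.sum_pair (Ne.symm hp)]
      exact Finset.sum_le_sum_of_subset_of_nonneg (Finset.subset_univ _)
        (fun x _ _ => hnn i x)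
    have := hsub i
    have := hnn i p
    linarith
  have hpow : ∀ t : ℕ, (q ^ t) i i = 1 := by
    intro t
    induction t with
    | zero => simp [Matrix.one_apply_eq]
    | succ t ih =>
      rw [pow_succ', Matrix.mul_apply, Finset.sum_eq_single i]
      · rw [heq, ih]; ring
      · intro b _ hb; rw [hzero b hb]; ring
      · intro hb; exact absurd (Finset.mem_univ i) hb
  have h1 : Tendsto (fun _ : ℕ => (1:ℝ)) atTop (nhds 0) :=
    (htr i i).congr (fun t => hpow t)
  have := tendsto_nhds_unique h1 tendsto_const_nhds
  norm_num at this

lemma sum_key {n : ℕ} (i : Fin n) (f : Fin n → ℝ) :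
    (∑ p, if p = i then (0:ℝ) else f p) = (∑ p, f p) - f i := by
  have h : ∀ p, (if p = i then (0:ℝ) else f p) = f p - (if p = i then f p else 0) := by
    intro p; split <;> simp
  simp_rw [h]
  rw [Finset.sum_sub_distrib, Finset.sum_ite_eq' Finset.univ i f]
  simp

lemma amplbar_i {n : ℕ} (q : Matrix (Fin n) (Fin n) ℝ) (i : Fin n) (hs : (1:ℝ) - q i i ≠ 0) :
    1 - ampl (pivotQ q i) i = (1 - ampl q i) / (1 - q i i) := by
  have h1 : ampl (pivotQ q i) i = (∑ p, q i p / (1 - q i i)) - q i i / (1 - q i i) := by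
    simp only [ampl, pivotQ, eq_self_iff_true, if_true]
    rw [sum_key]
  rw [h1, ← Finset.sum_div]
  show 1 - ((∑ p, q i p) / (1 - q i i) - q i i / (1 - q i i)) = (1 - ∑ p, q i p) / (1 - q i i)
  field_simp
  ring

lemma amplbar_j {n : ℕ} (q : Matrix (Fin n) (Fin n) ℝ) (i j : Fin n) (hji : j ≠ i)
    (hs : (1:ℝ) - q i i ≠ 0) :
    1 - ampl (pivotQ q i) j
      = (1 - ampl q j) + q j i * ((1 - ampl q i) / (1 - q i i)) := by
  have h1 : ampl (pivotQ q i) j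
      = (∑ p, (q j p + q j i * (q i p / (1 - q i i))))
        - (q j i + q j i * (q i i / (1 - q i i))) := by
    simp only [ampl, pivotQ, if_neg hji]
    rw [sum_key]
  rw [h1, Finset.sum_add_distrib]
  have h2 : ∑ p, q j i * (q i p / (1 - q i i)) = q j i * ((∑ p, q i p) / (1 - q i i)) := by
    rw [← Finset.mul_sum, ← Finset.sum_div]
  rw [h2]
  show 1 - ((∑ p, q j p) + q j i * ((∑ p, q i p) / (1 - q i i))
      - (q j i + q j i * (q i i / (1 - q i i))))
    = (1 - ∑ p, q j p) + q j i * ((1 - ∑ p, q i p) / (1 - q i i))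
  field_simp
  ring

/-- if `q` is nonnegative, substochastic and transient, `M` is a nonempty set of
states, and `i ∈ M` is weakly preferable to every other state of `M`, then pivoting at `i`
preserves the ratio of `i` and, for every other `j ∈ M`, can only improve the ratio of `j`,
but not above that of `i`: `ρ̄(i) = ρ(i)` and `ρ(i) ≥ ρ̄(j) ≥ ρ(j)`. -/
theorem pivot_ratio_monotone {n : ℕ} (q : Matrix (Fin n) (Fin n) ℝ) (r : Fin n → ℝ)
    (hnn : ∀ j p, 0 ≤ q j p) (hsub : ∀ j, ∑ p, q j p ≤ 1)
    (htr : ∀ j p, Tendsto (fun t : ℕ => (q ^ t) j p) atTop (nhds 0))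
    (M : Finset (Fin n)) (i : Fin n) (hiM : i ∈ M)
    (hpref : ∀ j ∈ M, j ≠ i → WeaklyPref q r i j) :
    rhoOf (pivotQ q i) (pivotR q r i) i = rhoOf q r i ∧
      ∀ j ∈ M, j ≠ i →
        rhoOf q r j ≤ rhoOf (pivotQ q i) (pivotR q r i) j ∧
        rhoOf (pivotQ q i) (pivotR q r i) j ≤ rhoOf q r i := by
  have hqii : q i i < 1 := diag_lt_one q i hnn hsub htr
  have hs : (0:ℝ) < 1 - q i i := by linarith
  have hsne : (1:ℝ) - q i i ≠ 0 := ne_of_gt hs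
  have hA : 0 ≤ 1 - ampl q i := by
    have := hsub i; simp only [ampl]; linarith
  have hAi := amplbar_i q i hsne
  have hriP : pivotR q r i i = r i / (1 - q i i) := by simp [pivotR]
  constructor
  · by_cases hAlt : ampl q i < 1
    · have hApos : 0 < 1 - ampl q i := by linarith
      have h1 : ampl (pivotQ q i) i < 1 := by
        have h2 : 0 < (1 - ampl q i) / (1 - q i i) := div_pos hApos hs
        linarith
      simp only [rhoOf]
      rw [if_pos h1, if_pos hAlt, hriP, hAi]
      congr 1
      field_simp
    · have hA0 : 1 - ampl q i = 0 := by push_neg at hAlt; linarith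
      have hD0 : 1 - ampl (pivotQ q i) i = 0 := by rw [hAi, hA0, zero_div]
      have h1 : ¬ ampl (pivotQ q i) i < 1 := by intro h; linarith
      simp only [rhoOf]
      rw [if_neg h1, if_neg hAlt, hriP]
      by_cases hri0 : 0 ≤ r i
      · rw [if_pos (div_nonneg hri0 hs.le), if_pos hri0]
      · rw [if_neg, if_neg hri0]
        intro h
        have h2 := mul_nonneg h hs.le
        rw [div_mul_cancel₀ _ hsne] at h2
        exact hri0 h2
  · intro j hjM hji
    have hp := hpref j hjM hji
    have hB : 0 ≤ 1 - ampl q j := by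
      have := hsub j; simp only [ampl]; linarith
    have hc : 0 ≤ q j i := hnn j i
    have hDj := amplbar_j q i j hji hsne
    have hrj : pivotR q r i j = r j + q j i * (r i / (1 - q i i)) := by
      simp [pivotR, hji]
    have hkey : r j * (1 - ampl q i) ≤ r i * (1 - ampl q j) := by
      rcases hp with h | ⟨h, _⟩ <;> nlinarith [h]
    by_cases hBlt : ampl q j < 1
    · -- B > 0
      have hBpos : 0 < 1 - ampl q j := by linarith
      have hDpos : 0 < 1 - ampl (pivotQ q i) j := by
        have h2 : 0 ≤ q j i * ((1 - ampl q i) / (1 - q i i)) :=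
          mul_nonneg hc (div_nonneg hA hs.le)
        rw [hDj]; linarith
      have hDlt : ampl (pivotQ q i) j < 1 := by linarith
      constructor
      · simp only [rhoOf]
        rw [if_pos hBlt, if_pos hDlt, EReal.coe_le_coe_iff,
          div_le_div_iff₀ hBpos hDpos, hrj, hDj]
        have h2 : q j i * (r j * (1 - ampl q i)) / (1 - q i i)
            ≤ q j i * (r i * (1 - ampl q j)) / (1 - q i i) := by
          gcongr ?x / (1 - q i i)
          exact mul_le_mul_of_nonneg_left hkey hc
        have e1 : r j * (1 - ampl q j + q j i * ((1 - ampl q i) / (1 - q i i)))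
            = r j * (1 - ampl q j) + q j i * (r j * (1 - ampl q i)) / (1 - q i i) := by
          ring
        have e2 : (r j + q j i * (r i / (1 - q i i))) * (1 - ampl q j)
            = r j * (1 - ampl q j) + q j i * (r i * (1 - ampl q j)) / (1 - q i i) := by
          ring
        linarith
      · by_cases hAlt : ampl q i < 1
        · have hApos : 0 < 1 - ampl q i := by linarith
          simp only [rhoOf]
          rw [if_pos hDlt, if_pos hAlt, EReal.coe_le_coe_iff,
            div_le_div_iff₀ hDpos hApos, hrj, hDj]
          have e1 : (r j + q j i * (r i / (1 - q i i))) * (1 - ampl q i)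
              = r j * (1 - ampl q i) + q j i * (r i * (1 - ampl q i)) / (1 - q i i) := by
            ring
          have e2 : r i * (1 - ampl q j + q j i * ((1 - ampl q i) / (1 - q i i)))
              = r i * (1 - ampl q j) + q j i * (r i * (1 - ampl q i)) / (1 - q i i) := by
            ring
          linarith
        · have hA0 : 1 - ampl q i = 0 := by push_neg at hAlt; linarith
          rw [hA0, mul_zero] at hkey
          have hri0 : 0 ≤ r i := by
            by_contra hx
            push_neg at hx
            nlinarith [mul_neg_of_neg_of_pos hx hBpos]
          simp only [rhoOf]
          rw [if_neg hAlt, if_pos hri0]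
          exact le_top
    · -- B = 0
      have hB0 : 1 - ampl q j = 0 := by push_neg at hBlt; linarith
      have haj : ampl q j = 1 := by linarith
      by_cases hAlt : ampl q i < 1
      · -- A > 0
        have hApos : 0 < 1 - ampl q i := by linarith
        have hrjneg : r j < 0 := by
          by_contra hx
          push_neg at hx
          rcases hp with h | ⟨h, hcat⟩
          · rw [haj, one_mul] at h
            nlinarith [mul_nonneg hx hApos.le]
          · have h4 : r j * (1 - ampl q i) = 0 := by
              linear_combination (-1 : ℝ) * h + r i * hB0
            have hrj0 : r j = 0 := by
              rcases mul_eq_zero.mp h4 with h5 | h5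
              · exact h5
              · exact absurd h5 (ne_of_gt hApos)
            have h2 : catOf q r i = 2 := by simp [catOf, hAlt]
            have h3 : catOf q r j = 1 := by simp [catOf, hBlt, hrj0.ge]
            rw [h2, h3] at hcat
            omega
        constructor
        · simp only [rhoOf]
          rw [if_neg hBlt, if_neg (not_le.mpr hrjneg)]
          exact bot_le
        · by_cases hcpos : 0 < q j i
          · have hDpos : 0 < 1 - ampl (pivotQ q i) j := by
              rw [hDj, hB0]
              have := mul_pos hcpos (div_pos hApos hs)
              linarith
            have hDlt : ampl (pivotQ q i) j < 1 := by linarith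
            simp only [rhoOf]
            rw [if_pos hDlt, if_pos hAlt, EReal.coe_le_coe_iff,
              div_le_div_iff₀ hDpos hApos, hrj, hDj, hB0]
            have h5 : r j * (1 - ampl q i) ≤ 0 :=
              le_of_lt (mul_neg_of_neg_of_pos hrjneg hApos)
            have e1 : (r j + q j i * (r i / (1 - q i i))) * (1 - ampl q i)
                = r j * (1 - ampl q i) + q j i * (r i * (1 - ampl q i)) / (1 - q i i) := by
              ring
            have e2 : r i * (0 + q j i * ((1 - ampl q i) / (1 - q i i)))
                = q j i * (r i * (1 - ampl q i)) / (1 - q i i) := by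
              ring
            linarith
          · have hc0 : q j i = 0 := le_antisymm (not_lt.mp hcpos) hc
            have hD0 : 1 - ampl (pivotQ q i) j = 0 := by
              rw [hDj, hB0, hc0]; ring
            have hnl : ¬ ampl (pivotQ q i) j < 1 := by intro h; linarith
            have hrjbar : pivotR q r i j = r j := by rw [hrj, hc0]; ring
            simp only [rhoOf]
            rw [if_neg hnl, hrjbar, if_neg (not_le.mpr hrjneg)]
            exact bot_le
      · -- A = 0
        have hA0 : 1 - ampl q i = 0 := by push_neg at hAlt; linarith
        have hD0 : 1 - ampl (pivotQ q i) j = 0 := by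
          rw [hDj, hB0, hA0]
          simp
        have hnl : ¬ ampl (pivotQ q i) j < 1 := by intro h; linarith
        rcases hp with h | ⟨h, hcat⟩
        · exfalso
          have h1 : ampl q i = 1 := by linarith
          rw [h1, haj, one_mul, one_mul] at h
          linarith
        · by_cases hri0 : 0 ≤ r i
          · constructor
            · by_cases hrj0 : 0 ≤ r j
              · have hnn2 : 0 ≤ pivotR q r i j := by
                  rw [hrj]
                  exact add_nonneg hrj0 (mul_nonneg hc (div_nonneg hri0 hs.le))
                simp only [rhoOf]
                rw [if_neg hnl, if_pos hnn2]
                exact le_top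
              · simp only [rhoOf]
                rw [if_neg hBlt, if_neg hrj0]
                exact bot_le
            · simp only [rhoOf]
              rw [if_neg hAlt, if_pos hri0]
              exact le_top
          · have hrj0 : ¬ 0 ≤ r j := by
              intro hrj0
              have h2 : catOf q r i = 3 := by simp [catOf, hAlt, hri0]
              have h3 : catOf q r j = 1 := by simp [catOf, hBlt, hrj0]
              rw [h2, h3] at hcat
              omega
            have hrbarneg : pivotR q r i j < 0 := by
              rw [hrj]
              push_neg at hri0 hrj0
              have h6 : q j i * (r i / (1 - q i i)) ≤ 0 :=
                mul_nonpos_of_nonneg_of_nonpos hc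
                  (div_nonpos_of_nonpos_of_nonneg hri0.le hs.le)
              linarith
            constructor
            · simp only [rhoOf]
              rw [if_neg hBlt, if_neg hrj0]
              exact bot_le
            · simp only [rhoOf]
              rw [if_neg hnl, if_neg (not_le.mpr hrbarneg), if_neg hAlt, if_neg hri0]
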